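/- Let μ(X) = ∑_{n≥2} n² e^{-π(n²-1)X} and ν(X) = ∑_{n≥2} n⁴ e^{-π(n²-1)X}. Then μ and ν are strictly decreasing functions of X on (0, ∞), and μ(3/5) < 1. -/

import Mathlib

noncomputable def muSum (X : ℝ) : ℝ :=
  ∑' n : ℕ, ((n : ℝ) + 2)^2 * Real.exp (-Real.pi * (((n : ℝ) + 2)^2 - 1) * X)

noncomputable def nuSum (X : ℝ) : ℝ :=
  ∑' n : ℕ, ((n : ℝ) + 2)^4 * Real.exp (-Real.pi * (((n : ℝ) + 2)^2 - 1) * X)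

open Real

lemma exp_term_le (n : ℕ) {X : ℝ} (hX : 0 < X) :
    Real.exp (-Real.pi * (((n : ℝ) + 2)^2 - 1) * X) ≤ Real.exp (-(3 * Real.pi * X)) ^ (n + 1) := by
  have hπ := Real.pi_pos
  rw [← Real.exp_nat_mul]
  apply Real.exp_le_exp.mpr
  have hn : (0:ℝ) ≤ (n:ℝ) := Nat.cast_nonneg n
  push_cast
  nlinarith [mul_pos hπ hX, mul_nonneg (mul_nonneg hπ.le hX.le) hn,
    mul_nonneg (mul_nonneg (mul_nonneg hπ.le hX.le) hn) hn]

lemma term_summable (k : ℕ) {X : ℝ} (hX : 0 < X) :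
    Summable (fun n : ℕ => ((n : ℝ) + 2)^k * Real.exp (-Real.pi * (((n : ℝ) + 2)^2 - 1) * X)) := by
  have hπ := Real.pi_pos
  set r : ℝ := Real.exp (-(3 * Real.pi * X)) with hr
  have hr0 : 0 < r := Real.exp_pos _
  have hr1 : r < 1 := by
    rw [hr, Real.exp_lt_one_iff]
    nlinarith
  have hg : Summable (fun n : ℕ => (n : ℝ)^k * r^n) :=
    summable_pow_mul_geometric_of_norm_lt_one k
      (by rw [Real.norm_eq_abs, abs_of_pos hr0]; exact hr1)
  have hg2 : Summable (fun n : ℕ => ((n : ℝ) + 2)^k * r^(n+2)) := by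
    have h := hg.comp_injective (add_left_injective 2)
    refine h.congr fun n => ?_
    simp [Function.comp]
  have hg3 : Summable (fun n : ℕ => ((n : ℝ) + 2)^k * r^(n+1)) := by
    have h := hg2.mul_left r⁻¹
    refine h.congr fun n => ?_
    field_simp
    ring
  refine Summable.of_nonneg_of_le (fun n => by positivity) (fun n => ?_) hg3
  exact mul_le_mul_of_nonneg_left (exp_term_le n hX) (by positivity)

lemma anti_aux (k : ℕ) :
    StrictAntiOn (fun X : ℝ => ∑' n : ℕ, ((n : ℝ) + 2)^k *
      Real.exp (-Real.pi * (((n : ℝ) + 2)^2 - 1) * X)) (Set.Ioi (0 : ℝ)) := by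
  intro X hX Y hY hXY
  have hπ := Real.pi_pos
  simp only [Set.mem_Ioi] at hX hY
  refine Summable.tsum_lt_tsum (i := 0) (fun n => ?_) ?_ (term_summable k hY) (term_summable k hX)
  · have hn : (0:ℝ) ≤ (n:ℝ) := Nat.cast_nonneg n
    refine mul_le_mul_of_nonneg_left (Real.exp_le_exp.mpr ?_) (by positivity)
    have h1 : (0:ℝ) < ((n : ℝ) + 2)^2 - 1 := by nlinarith
    nlinarith [mul_pos hπ h1]
  · refine mul_lt_mul_of_pos_left (Real.exp_lt_exp.mpr ?_) (by positivity)
    push_cast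
    nlinarith [mul_pos hπ (sub_pos.mpr hXY)]

lemma pow_sq_le (n : ℕ) : ((n : ℝ) + 2)^2 ≤ 4 * 3^n := by
  induction n with
  | zero => norm_num
  | succ m ih =>
    have hm : (0:ℝ) ≤ (m:ℝ) := Nat.cast_nonneg m
    push_cast
    rw [show ((3:ℝ))^(m+1) = 3^m * 3 from pow_succ 3 m]
    nlinarith [sq_nonneg ((m:ℝ))]

lemma q_small : Real.exp (-(3 * Real.pi * (3/5))) < 1/100 := by
  have hπ := Real.pi_gt_three
  have h5 : (5:ℝ) ≤ 3 * Real.pi * (3/5) := by nlinarith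
  have he : (100:ℝ) < Real.exp 5 := by
    have h1 := Real.exp_one_gt_d9
    have : Real.exp 5 = Real.exp 1 ^ 5 := by
      rw [← Real.exp_nat_mul]; norm_num
    have h27 : (2.7:ℝ) ^ 5 < Real.exp 1 ^ 5 :=
      pow_lt_pow_left₀ (by linarith) (by norm_num) (by norm_num)
    rw [this]
    nlinarith [h27]
  have : (100:ℝ) < Real.exp (3 * Real.pi * (3/5)) :=
    lt_of_lt_of_le he (Real.exp_le_exp.mpr h5)
  rw [Real.exp_neg]
  rw [show (1:ℝ)/100 = (100:ℝ)⁻¹ by norm_num]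
  exact inv_strictAnti₀ (by norm_num) this

theorem mu_nu_antitone_and_mu_lt_one :
    StrictAntiOn muSum (Set.Ioi (0 : ℝ)) ∧ StrictAntiOn nuSum (Set.Ioi (0 : ℝ)) ∧
      muSum (3/5) < 1 := by
  refine ⟨fun a ha b hb hab => ?_, fun a ha b hb hab => ?_, ?_⟩
  · simpa only [muSum] using anti_aux 2 ha hb hab
  · simpa only [nuSum] using anti_aux 4 ha hb hab
  · set q : ℝ := Real.exp (-(3 * Real.pi * (3/5))) with hq
    have hq0 : 0 < q := Real.exp_pos _
    have hq1 : q < 1/100 := q_small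
    have h3q : 3 * q < 1 := by linarith
    have hgeo : Summable (fun n : ℕ => 4 * q * (3 * q)^n) :=
      (summable_geometric_of_lt_one (by positivity) h3q).mul_left _
    have hbound : ∀ n : ℕ, ((n : ℝ) + 2)^2 *
        Real.exp (-Real.pi * (((n : ℝ) + 2)^2 - 1) * (3/5)) ≤ 4 * q * (3 * q)^n := by
      intro n
      have h1 := exp_term_le n (by norm_num : (0:ℝ) < 3/5)
      have h2 := pow_sq_le n
      have h3 : ((n : ℝ) + 2)^2 * Real.exp (-Real.pi * (((n : ℝ) + 2)^2 - 1) * (3/5))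
          ≤ 4 * 3^n * q^(n+1) :=
        mul_le_mul h2 h1 (Real.exp_pos _).le (by positivity)
      calc ((n : ℝ) + 2)^2 * Real.exp (-Real.pi * (((n : ℝ) + 2)^2 - 1) * (3/5))
          ≤ 4 * 3^n * q^(n+1) := h3
        _ = 4 * q * (3 * q)^n := by rw [mul_pow]; ring
    have hle : muSum (3/5) ≤ ∑' n : ℕ, 4 * q * (3 * q)^n := by
      rw [muSum]
      exact Summable.tsum_le_tsum hbound (term_summable 2 (by norm_num)) hgeo
    have hgval : ∑' n : ℕ, 4 * q * (3 * q)^n = 4 * q * (1 - 3*q)⁻¹ := by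
      rw [tsum_mul_left, tsum_geometric_of_lt_one (by positivity) h3q]
    have hlt : 4 * q * (1 - 3*q)⁻¹ < 1 := by
      rw [mul_inv_lt_iff₀ (by linarith)]
      linarith
    calc muSum (3/5) ≤ ∑' n : ℕ, 4 * q * (3 * q)^n := hle
      _ = 4 * q * (1 - 3*q)⁻¹ := hgval
      _ < 1 := hlt
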